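/- Let $T^+$ be a connected graded Hopf algebra with character group $G^+$ (under convolution), and let $T$ be a graded right $T^+$-comodule with triangular coaction as in a concrete regularity structure. Given $\sigma \leq^{(+)} \tau$ basis elements, and $\mathsf{g} : \mathbb{R}^d \to G^+$, one has the finite expansion $\mathsf{g}_{yx}(\tau/\sigma) = \mathsf{g}_y(\tau/\sigma) - \mathsf{g}_x(\tau/\sigma) - \sum_{n \geq 1}(-1)^{n-1}\sum_{\sigma < \sigma_n < \cdots < \sigma_1 < \tau} \mathsf{g}_x(\tau/\sigma_1)\cdots\mathsf{g}_x(\sigma_{n-1}/\sigma_n)\big(\mathsf{g}_y(\sigma_n/\sigma) - \mathsf{g}_x(\sigma_n/\sigma)\big)$, where $\mathsf{g}_{yx} = \mathsf{g}_y * \mathsf{g}_x^{-1}$ and the chains $\sigma < \sigma_n < \cdots < \sigma_1 < \tau$ run over basis elements. -/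

import Mathlib

open Finset

private lemma pathSum19 {B : Type*} [Fintype B] [DecidableEq B]
    (X Y : Matrix B B ℝ) : ∀ (m : ℕ) (τ σ : B),
    (X ^ (m + 1) * Y) τ σ =
      ∑ s : Fin (m + 1) → B,
        X τ (s 0) * (∏ i : Fin m, X (s i.castSucc) (s i.succ)) * Y (s (Fin.last m)) σ := by
  intro m
  induction m with
  | zero =>
    intro τ σ
    rw [pow_one, Matrix.mul_apply, ← (Equiv.funUnique (Fin 1) B).symm.sum_comp]
    simp
  | succ m ih =>
    intro τ σ
    rw [pow_succ', Matrix.mul_assoc, Matrix.mul_apply]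
    rw [← (Fin.consEquiv (fun _ : Fin (m + 2) => B)).sum_comp, Fintype.sum_prod_type]
    refine Finset.sum_congr rfl fun c _ => ?_
    rw [ih c σ, Finset.mul_sum]
    refine Finset.sum_congr rfl fun t _ => ?_
    simp only [Fin.consEquiv_apply, Fin.cons_zero, Fin.prod_univ_succ, Fin.castSucc_zero,
      Fin.cons_succ, ← Fin.succ_castSucc, ← Fin.succ_last]
    ring

private lemma chain19 {B : Type*} [Fintype B] [DecidableEq B]
    (deg : B → ℝ) (N : Matrix B B ℝ) (hN : ∀ a b, N a b ≠ 0 → deg b < deg a) :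
    ∀ (k : ℕ) (a b : B), (N ^ k) a b ≠ 0 →
      ∃ s : Fin (k + 1) → B, s 0 = a ∧ ∀ i j : Fin (k + 1), i < j → deg (s j) < deg (s i) := by
  intro k
  induction k with
  | zero =>
    intro a b _
    refine ⟨fun _ => a, rfl, fun i j hij => ?_⟩
    have hi := i.isLt; have hj := j.isLt
    rw [Fin.lt_def] at hij; omega
  | succ k ih =>
    intro a b h
    rw [pow_succ', Matrix.mul_apply] at h
    obtain ⟨c, -, hc⟩ := Finset.exists_ne_zero_of_sum_ne_zero h
    have h1 : N a c ≠ 0 := left_ne_zero_of_mul hc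
    have h2 : (N ^ k) c b ≠ 0 := right_ne_zero_of_mul hc
    obtain ⟨t, ht0, ht⟩ := ih c b h2
    have hca : deg c < deg a := hN a c h1
    have hta : ∀ j, deg (t j) < deg a := by
      intro j
      rcases eq_or_ne j 0 with rfl | hj
      · rw [ht0]; exact hca
      · exact lt_trans (ht0 ▸ ht 0 j (Fin.pos_of_ne_zero hj)) hca
    refine ⟨Fin.cons a t, Fin.cons_zero _ _, ?_⟩
    intro i j hij
    revert hij
    refine Fin.cases ?_ (fun i' => ?_) i
    · intro hij
      obtain ⟨j', rfl⟩ := Fin.eq_succ_of_ne_zero (Fin.pos_iff_ne_zero.mp hij)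
      simpa using hta j'
    · intro hij
      obtain ⟨j', rfl⟩ := Fin.eq_succ_of_ne_zero
        (Fin.pos_iff_ne_zero.mp (lt_trans (Fin.succ_pos i') hij))
      simpa using ht i' j' (by simpa [Fin.succ_lt_succ_iff] using hij)

private lemma nilp19 {B : Type*} [Fintype B] [DecidableEq B]
    (deg : B → ℝ) (N : Matrix B B ℝ) (hN : ∀ a b, N a b ≠ 0 → deg b < deg a) :
    N ^ (Fintype.card B) = 0 := by
  ext a b
  rw [Matrix.zero_apply]
  by_contra h
  obtain ⟨s, -, hs⟩ := chain19 deg N hN _ a b h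
  have hinj : Function.Injective s := by
    intro i j hij
    by_contra hne
    rcases lt_or_gt_of_ne hne with h' | h'
    · exact absurd (hij ▸ hs i j h') (lt_irrefl _)
    · exact absurd (hij ▸ hs j i h') (lt_irrefl _)
  have := Fintype.card_le_of_injective s hinj
  simp at this

private lemma matrix_main19 {B : Type*} [Fintype B] [DecidableEq B] (deg : B → ℝ)
    (A Bm Cm : Matrix B B ℝ)
    (hBmAC : Bm = A * Cm)
    (hAdiag : ∀ μ, A μ μ = 1) (hBdiag : ∀ μ, Bm μ μ = 1)
    (hAoff : ∀ μ η, η ≠ μ → ¬ deg η < deg μ → A μ η = 0)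
    (τ σ : B) (hne : σ ≠ τ) :
    Cm τ σ = Bm τ σ - A τ σ -
      ∑ m ∈ Finset.range (Fintype.card B), ((-1:ℝ)^m) *
        ∑ s : Fin (m+1) → B,
          if (s 0 ≠ τ ∧ (∀ i : Fin m, s i.succ ≠ s i.castSucc) ∧ s (Fin.last m) ≠ σ) then
            A τ (s 0) * (∏ i : Fin m, A (s i.castSucc) (s i.succ)) *
              (Bm (s (Fin.last m)) σ - A (s (Fin.last m)) σ)
          else 0 := by
  set K := Fintype.card B with hK
  set N : Matrix B B ℝ := A - 1 with hNdef
  set M : Matrix B B ℝ := Bm - A with hMdef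
  have hN0 : ∀ μ, N μ μ = 0 := by
    intro μ; simp [hNdef, Matrix.sub_apply, Matrix.one_apply_eq, hAdiag]
  have hNoff : ∀ μ η, η ≠ μ → N μ η = A μ η := by
    intro μ η h; simp [hNdef, Matrix.sub_apply, Matrix.one_apply_ne' h]
  have hM0 : ∀ μ, M μ μ = 0 := by
    intro μ; simp [hMdef, Matrix.sub_apply, hAdiag, hBdiag]
  have hNd : ∀ a b, N a b ≠ 0 → deg b < deg a := by
    intro a b h
    by_contra hdeg
    rcases eq_or_ne b a with rfl | hne'
    · exact h (hN0 _)
    · exact h ((hNoff a b hne').trans (hAoff a b hne' hdeg))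
  have hNpow : N ^ K = 0 := nilp19 deg N hNd
  have hMfact : M = A * (Cm - 1) := by
    rw [Matrix.mul_sub, Matrix.mul_one, ← hBmAC, hMdef]
  have hgeom : (∑ i ∈ Finset.range (K+1), (-N)^i) * A = 1 := by
    have hz : (-N) ^ (K+1) = 0 := by
      have hz' : N ^ (K+1) = 0 := by rw [pow_succ, hNpow, zero_mul]
      rw [neg_pow, hz', mul_zero]
    have hg := geom_sum_mul (-N) (K+1)
    rw [hz, zero_sub] at hg
    have hA1 : A = -(-N - 1) := by rw [hNdef]; abel
    rw [hA1, mul_neg, hg, neg_neg]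
  have hD : Cm - 1 = ∑ i ∈ Finset.range (K+1), (-N)^i * M := by
    calc Cm - 1 = 1 * (Cm - 1) := (one_mul _).symm
      _ = ((∑ i ∈ Finset.range (K+1), (-N)^i) * A) * (Cm - 1) := by rw [hgeom]
      _ = (∑ i ∈ Finset.range (K+1), (-N)^i) * (A * (Cm - 1)) := by rw [mul_assoc]
      _ = (∑ i ∈ Finset.range (K+1), (-N)^i) * M := by rw [← hMfact]
      _ = ∑ i ∈ Finset.range (K+1), (-N)^i * M := Finset.sum_mul _ _ _
  -- chain sums
  have hChain : ∀ m : ℕ,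
      (∑ s : Fin (m+1) → B,
        if (s 0 ≠ τ ∧ (∀ i : Fin m, s i.succ ≠ s i.castSucc) ∧ s (Fin.last m) ≠ σ) then
          A τ (s 0) * (∏ i : Fin m, A (s i.castSucc) (s i.succ)) *
            (Bm (s (Fin.last m)) σ - A (s (Fin.last m)) σ)
        else 0) = (N ^ (m+1) * M) τ σ := by
    intro m
    rw [pathSum19 N M m τ σ]
    refine Finset.sum_congr rfl fun s _ => ?_
    by_cases hc : (s 0 ≠ τ ∧ (∀ i : Fin m, s i.succ ≠ s i.castSucc) ∧ s (Fin.last m) ≠ σ)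
    · obtain ⟨h0, hmid, hlast⟩ := hc
      have hprod : (∏ i : Fin m, N (s i.castSucc) (s i.succ))
          = ∏ i : Fin m, A (s i.castSucc) (s i.succ) :=
        Finset.prod_congr rfl fun i _ => hNoff _ _ (hmid i)
      have hlastM : M (s (Fin.last m)) σ
          = Bm (s (Fin.last m)) σ - A (s (Fin.last m)) σ := Matrix.sub_apply _ _ _ _
      rw [if_pos ⟨h0, hmid, hlast⟩, hNoff τ (s 0) h0, hprod, hlastM]
    · rw [if_neg hc]
      push_neg at hc
      by_cases h0 : s 0 = τ
      · rw [h0, hN0, zero_mul, zero_mul]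
      by_cases hl : s (Fin.last m) = σ
      · rw [hl]
        have : M σ σ = 0 := hM0 σ
        rw [this, mul_zero]
      · obtain ⟨i, hi⟩ : ∃ i : Fin m, s i.succ = s i.castSucc := by
          by_contra hmid
          push_neg at hmid
          exact hl (hc h0 hmid)
        have : (∏ i : Fin m, N (s i.castSucc) (s i.succ)) = 0 :=
          Finset.prod_eq_zero (Finset.mem_univ i) (by rw [hi]; exact hN0 _)
        rw [this, mul_zero, zero_mul]
  have hentry : Cm τ σ = ∑ i ∈ Finset.range (K+1), (-1:ℝ)^i * ((N^i * M) τ σ) := by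
    have h1 : Cm τ σ = (Cm - 1) τ σ := by
      simp [Matrix.sub_apply, Matrix.one_apply_ne' hne]
    rw [h1, hD]
    rw [Matrix.sum_apply]
    refine Finset.sum_congr rfl fun i _ => ?_
    have : (-N) ^ i = ((-1:ℝ)^i) • N ^ i := by
      rw [show -N = (-1:ℝ) • N by rw [neg_one_smul], smul_pow]
    rw [this, Matrix.smul_mul, Matrix.smul_apply, smul_eq_mul]
  rw [hentry, Finset.sum_range_succ']
  have hfirst : (-1:ℝ)^0 * ((N^0 * M) τ σ) = Bm τ σ - A τ σ := by
    rw [pow_zero, pow_zero, one_mul, one_mul, hMdef]; rfl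
  rw [hfirst]
  have hrest : (∑ i ∈ Finset.range K, (-1:ℝ)^(i+1) * ((N^(i+1) * M) τ σ))
      = - ∑ m ∈ Finset.range K, ((-1:ℝ)^m) *
          ∑ s : Fin (m+1) → B,
            if (s 0 ≠ τ ∧ (∀ i : Fin m, s i.succ ≠ s i.castSucc) ∧ s (Fin.last m) ≠ σ) then
              A τ (s 0) * (∏ i : Fin m, A (s i.castSucc) (s i.succ)) *
                (Bm (s (Fin.last m)) σ - A (s (Fin.last m)) σ)
            else 0 := by
    rw [← Finset.sum_neg_distrib]
    refine Finset.sum_congr rfl fun m _ => ?_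
    rw [hChain m]
    ring
  rw [hrest]
  ring


/-- In a concrete regularity structure given in coordinates (basis `B` of the
graded right comodule `T` with homogeneity `deg` and triangular coaction constants `d`, basis
`Bp` of the connected graded Hopf algebra `T⁺` with coproduct constants `dp` and unit basis
element `one`), let `g : ℝ^d → G⁺` be a map into the character group and
`g_{yx} = g_y * g_x⁻¹`, encoded by `G` and the cocycle relation `g_y = g_{yx} * g_x`.  Then for
basis elements `σ ≤ τ` one has the finite chain expansion
`g_{yx}(τ/σ) = g_y(τ/σ) - g_x(τ/σ) - ∑_{n≥1}(-1)^{n-1} ∑_{σ<σ_n<⋯<σ_1<τ}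
   g_x(τ/σ_1)⋯g_x(σ_{n-1}/σ_n)(g_y(σ_n/σ) - g_x(σ_n/σ))`,
where `g(μ/η) = ∑_θ (Δμ)^{ηθ} g(θ)` vanishes unless `η ≤ μ`, so the chain sums may be taken
over all adjacent-distinct tuples; chains have length at most `card B`. -/
theorem stmt19 {dim : ℕ} {B Bp : Type*} [Fintype B] [Fintype Bp] [DecidableEq B] [DecidableEq Bp]
    (d : B → B → Bp → ℝ) (dp : Bp → Bp → Bp → ℝ) (one : Bp) (deg : B → ℝ)
    (hcomodule : ∀ (τ a : B) (b c : Bp),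
      ∑ σ : B, d τ σ c * d σ a b = ∑ θ : Bp, d τ a θ * dp θ b c)
    (hcoassoc : ∀ (τ a b c : Bp),
      ∑ σ : Bp, dp τ σ c * dp σ a b = ∑ θ : Bp, dp τ a θ * dp θ b c)
    (hcounitl : ∀ θ c : Bp, dp θ one c = if c = θ then 1 else 0)
    (hcounitr : ∀ θ b : Bp, dp θ b one = if b = θ then 1 else 0)
    (hdiag : ∀ (τ : B) (θ : Bp), d τ τ θ = if θ = one then 1 else 0)
    (htri : ∀ (τ σ : B) (θ : Bp), d τ σ θ ≠ 0 → σ = τ ∨ deg σ < deg τ)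
    (g : EuclideanSpace ℝ (Fin dim) → Bp → ℝ)
    (hgchar : ∀ x, g x one = 1)
    (G : EuclideanSpace ℝ (Fin dim) → EuclideanSpace ℝ (Fin dim) → Bp → ℝ)
    (Gone : ∀ x y, G y x one = 1)
    -- `g_y = g_{yx} * g_x`
    (hcocycle : ∀ x y θ, g y θ = ∑ b : Bp, ∑ c : Bp, dp θ b c * G y x b * g x c)
    (x y : EuclideanSpace ℝ (Fin dim)) (τ σ : B) (hne : σ ≠ τ)
    (hle : (fun θ => d τ σ θ) ≠ 0) :
    (∑ θ : Bp, d τ σ θ * G y x θ)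
      = (∑ θ : Bp, d τ σ θ * g y θ) - (∑ θ : Bp, d τ σ θ * g x θ)
        - ∑ m ∈ Finset.range (Fintype.card B), ((-1 : ℝ) ^ m) *
            ∑ s : Fin (m + 1) → B,
              if (s 0 ≠ τ ∧ (∀ i : Fin m, s i.succ ≠ s i.castSucc) ∧ s (Fin.last m) ≠ σ) then
                (∑ θ : Bp, d τ (s 0) θ * g x θ) *
                (∏ i : Fin m, (∑ θ : Bp, d (s i.castSucc) (s i.succ) θ * g x θ)) *
                ((∑ θ : Bp, d (s (Fin.last m)) σ θ * g y θ)
                  - (∑ θ : Bp, d (s (Fin.last m)) σ θ * g x θ))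
              else 0 := by
  classical
  let A : Matrix B B ℝ := Matrix.of fun μ η => ∑ θ : Bp, d μ η θ * g x θ
  let Bm : Matrix B B ℝ := Matrix.of fun μ η => ∑ θ : Bp, d μ η θ * g y θ
  let Cm : Matrix B B ℝ := Matrix.of fun μ η => ∑ θ : Bp, d μ η θ * G y x θ
  have hdiagsum : ∀ (h : Bp → ℝ), h one = 1 → ∀ μ : B, (∑ θ : Bp, d μ μ θ * h θ) = 1 := by
    intro h h1 μ
    simp only [hdiag, ite_mul, one_mul, zero_mul]
    rw [Finset.sum_ite_eq' Finset.univ one h]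
    simp [h1]
  have hAdiag : ∀ μ, A μ μ = 1 := fun μ => hdiagsum (g x) (hgchar x) μ
  have hBdiag : ∀ μ, Bm μ μ = 1 := fun μ => hdiagsum (g y) (hgchar y) μ
  have hAoff : ∀ μ η, η ≠ μ → ¬ deg η < deg μ → A μ η = 0 := by
    intro μ η h1 h2
    refine Finset.sum_eq_zero fun θ _ => ?_
    rcases eq_or_ne (d μ η θ) 0 with h | h
    · rw [h, zero_mul]
    · rcases htri μ η θ h with h' | h'
      · exact absurd h' h1
      · exact absurd h' h2
  have hBmAC : Bm = A * Cm := by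
    ext μ η
    rw [Matrix.mul_apply]
    show (∑ θ : Bp, d μ η θ * g y θ) = ∑ e : B, A μ e * Cm e η
    calc (∑ θ : Bp, d μ η θ * g y θ)
        = ∑ θ : Bp, ∑ b : Bp, ∑ c : Bp, d μ η θ * (dp θ b c * G y x b * g x c) := by
          refine Finset.sum_congr rfl fun θ _ => ?_
          rw [hcocycle x y θ, Finset.mul_sum]
          exact Finset.sum_congr rfl fun b _ => by rw [Finset.mul_sum]
      _ = ∑ b : Bp, ∑ c : Bp, (∑ θ : Bp, d μ η θ * dp θ b c) * (G y x b * g x c) := by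
          rw [Finset.sum_comm]
          refine Finset.sum_congr rfl fun b _ => ?_
          rw [Finset.sum_comm]
          refine Finset.sum_congr rfl fun c _ => ?_
          rw [Finset.sum_mul]
          exact Finset.sum_congr rfl fun θ _ => by ring
      _ = ∑ b : Bp, ∑ c : Bp, ∑ e : B, d μ e c * d e η b * (G y x b * g x c) := by
          refine Finset.sum_congr rfl fun b _ => Finset.sum_congr rfl fun c _ => ?_
          rw [← hcomodule μ η b c, Finset.sum_mul]
      _ = ∑ b : Bp, ∑ e : B, ∑ c : Bp, d μ e c * d e η b * (G y x b * g x c) :=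
          Finset.sum_congr rfl fun b _ => Finset.sum_comm
      _ = ∑ e : B, ∑ b : Bp, ∑ c : Bp, d μ e c * d e η b * (G y x b * g x c) :=
          Finset.sum_comm
      _ = ∑ e : B, A μ e * Cm e η := by
          refine Finset.sum_congr rfl fun e _ => ?_
          show _ = (∑ c : Bp, d μ e c * g x c) * (∑ b : Bp, d e η b * G y x b)
          rw [Finset.sum_mul_sum]
          rw [Finset.sum_comm]
          exact Finset.sum_congr rfl fun b _ => Finset.sum_congr rfl fun c _ => by ring
  exact matrix_main19 deg A Bm Cm hBmAC hAdiag hBdiag hAoff τ σ hne
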